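/- Let I ⊂ ℝ be a bounded interval, E ⊂ I a Lebesgue measurable set, and C a class of subintervals of I such that (1) every open subinterval of I is an at most countable union of disjoint elements of C, and (2) there is a constant ρ > 0 with L(C ∩ E) ≥ ρ·L(C) for every C ∈ C. Then L(E) = L(I). -/

import Mathlib

open MeasureTheory

/-- Knopp-type full-measure criterion: let `I ⊆ ℝ` be a bounded interval,
`E ⊆ I` measurable, and `𝒞` a family of subintervals of `I` such that every open
subinterval of `I` is an at most countable disjoint union of members of `𝒞`, and
`L(C ∩ E) ≥ ρ L(C)` for every `C ∈ 𝒞`. Then `L(E) = L(I)`. -/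
theorem knopp_full_measure (I : Set ℝ) (hIint : I.OrdConnected)
    (hIbdd : Bornology.IsBounded I) (E : Set ℝ) (hE : MeasurableSet E) (hEI : E ⊆ I)
    (𝒞 : Set (Set ℝ)) (h𝒞 : ∀ C ∈ 𝒞, C ⊆ I ∧ C.OrdConnected)
    (hcover : ∀ a b : ℝ, Set.Ioo a b ⊆ I → ∃ f : ℕ → Set ℝ,
      (∀ n, f n ∈ 𝒞 ∨ f n = ∅) ∧ Pairwise (Function.onFun Disjoint f) ∧
        Set.Ioo a b = ⋃ n, f n)
    (ρ : ℝ) (hρ : 0 < ρ)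
    (hdense : ∀ C ∈ 𝒞, ENNReal.ofReal ρ * volume C ≤ volume (C ∩ E)) :
    volume E = volume I := by
  classical
  set F : Set ℝ := I \ E with hFdef
  have hImeas : MeasurableSet I := hIint.measurableSet
  have hF : MeasurableSet F := hImeas.diff hE
  -- Key interval estimate
  have key : ∀ a b : ℝ, Set.Ioo a b ⊆ I →
      ENNReal.ofReal ρ * volume (Set.Ioo a b) ≤ volume (Set.Ioo a b ∩ E) := by
    intro a b hab
    obtain ⟨f, hf, hdisj, heq⟩ := hcover a b hab
    have hfm : ∀ n, MeasurableSet (f n) := by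
      intro n
      rcases hf n with h | h
      · exact (h𝒞 _ h).2.measurableSet
      · simp [h]
    have h1 : volume (Set.Ioo a b) = ∑' n, volume (f n) := by
      rw [heq]; exact measure_iUnion hdisj hfm
    have h2 : volume (Set.Ioo a b ∩ E) = ∑' n, volume (f n ∩ E) := by
      have : Set.Ioo a b ∩ E = ⋃ n, f n ∩ E := by
        rw [heq, Set.iUnion_inter]
      rw [this]
      exact measure_iUnion
        (fun i j hij => ((hdisj hij).mono Set.inter_subset_left Set.inter_subset_left))
        (fun n => (hfm n).inter hE)
    rw [h1, h2, ← ENNReal.tsum_mul_left]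
    refine ENNReal.tsum_le_tsum fun n => ?_
    rcases hf n with h | h
    · exact hdense _ h
    · simp [h]
  -- boundary of I is null
  have hbd : volume (I \ interior I) = 0 := by
    rcases Set.eq_empty_or_nonempty I with h | hne
    · simp [h]
    · have hbb : BddBelow I := hIbdd.bddBelow
      have hba : BddAbove I := hIbdd.bddAbove
      have hsub : I \ interior I ⊆ {sInf I, sSup I} := by
        intro x ⟨hxI, hxint⟩
        by_contra hx
        simp only [Set.mem_insert_iff, Set.mem_singleton_iff, not_or] at hx
        obtain ⟨hx1, hx2⟩ := hx
        have h1 : sInf I < x := lt_of_le_of_ne (csInf_le hbb hxI) (Ne.symm hx1)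
        have h2 : x < sSup I := lt_of_le_of_ne (le_csSup hba hxI) hx2
        obtain ⟨y, hyI, hyx⟩ := (csInf_lt_iff hbb hne).1 h1
        obtain ⟨z, hzI, hxz⟩ := (lt_csSup_iff hba hne).1 h2
        have : Set.Ioo y z ⊆ I := fun w hw => hIint.out hyI hzI ⟨hw.1.le, hw.2.le⟩
        exact hxint (mem_interior.2 ⟨Set.Ioo y z, this, isOpen_Ioo, ⟨hyx, hxz⟩⟩)
      exact measure_mono_null hsub ((Set.toFinite _).measure_zero _)
  -- F has measure zero
  have hFzero : volume F = 0 := by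
    by_contra hF0
    have hres : (volume.restrict F) ≠ 0 := by
      simpa [Measure.restrict_eq_zero] using hF0
    have hae1 : ∀ᵐ x ∂volume.restrict F,
        Filter.Tendsto (fun r => volume (F ∩ Metric.closedBall x r) /
          volume (Metric.closedBall x r)) (nhdsWithin 0 (Set.Ioi 0))
          (nhds (F.indicator 1 x)) :=
      ae_restrict_of_ae (Besicovitch.ae_tendsto_measure_inter_div_of_measurableSet volume hF)
    have hae2 : ∀ᵐ x ∂volume.restrict F, x ∈ F := ae_restrict_mem hF
    have hae3 : ∀ᵐ x ∂volume.restrict F, x ∈ interior I := by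
      rw [ae_iff, Measure.restrict_apply' hF]
      refine measure_mono_null ?_ hbd
      rintro x ⟨hx1, hx2⟩
      exact ⟨hx2.1, hx1⟩
    have : (MeasureTheory.ae (volume.restrict F)).NeBot := ae_neBot.2 hres
    obtain ⟨x, hxT, hxF, hxint⟩ := (hae1.and (hae2.and hae3)).exists
    obtain ⟨ε, hε, hball⟩ := Metric.isOpen_iff.1 isOpen_interior x hxint
    have hub : ∀ r ∈ Set.Ioo (0:ℝ) ε,
        volume (F ∩ Metric.closedBall x r) / volume (Metric.closedBall x r)
          ≤ 1 - ENNReal.ofReal ρ := by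
      intro r hr
      have hIoo : Set.Ioo (x - r) (x + r) ⊆ I := by
        intro y hy
        have : y ∈ Metric.ball x ε := by
          rw [Real.ball_eq_Ioo]
          constructor
          · linarith [hy.1, hr.2]
          · linarith [hy.2, hr.2]
        exact interior_subset (hball this)
      have hcb : Metric.closedBall x r = Set.Icc (x - r) (x + r) := Real.closedBall_eq_Icc
      have hV : volume (Metric.closedBall x r) = ENNReal.ofReal (x + r - (x - r)) := by
        rw [hcb, Real.volume_Icc]
      have hVIoo : volume (Set.Ioo (x - r) (x + r)) = volume (Metric.closedBall x r) := by
        rw [hV, Real.volume_Ioo]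
      have hV0 : volume (Metric.closedBall x r) ≠ 0 := by
        rw [hV]
        simp only [ne_eq, ENNReal.ofReal_eq_zero, not_le]
        linarith [hr.1]
      have hVtop : volume (Metric.closedBall x r) ≠ ⊤ := by
        rw [hV]; exact ENNReal.ofReal_ne_top
      set V := volume (Metric.closedBall x r)
      have hsum : volume (F ∩ Metric.closedBall x r) + ENNReal.ofReal ρ * V ≤ V := by
        have hkey : ENNReal.ofReal ρ * V ≤ volume (Set.Ioo (x - r) (x + r) ∩ E) := by
          rw [← hVIoo]; exact key _ _ hIoo
        have hdisj : Disjoint (F ∩ Metric.closedBall x r) (Set.Ioo (x - r) (x + r) ∩ E) := by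
          rw [Set.disjoint_left]
          rintro y ⟨hyF, _⟩ ⟨_, hyE⟩
          exact hyF.2 hyE
        calc volume (F ∩ Metric.closedBall x r) + ENNReal.ofReal ρ * V
            ≤ volume (F ∩ Metric.closedBall x r) + volume (Set.Ioo (x - r) (x + r) ∩ E) :=
              add_le_add_right hkey _
          _ = volume ((F ∩ Metric.closedBall x r) ∪ (Set.Ioo (x - r) (x + r) ∩ E)) :=
              (measure_union hdisj (measurableSet_Ioo.inter hE)).symm
          _ ≤ V := by
              refine measure_mono (Set.union_subset Set.inter_subset_right ?_)
              refine Set.Subset.trans Set.inter_subset_left ?_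
              rw [hcb]
              exact Set.Ioo_subset_Icc_self
      rw [ENNReal.div_le_iff hV0 hVtop]
      have h1 : (1 - ENNReal.ofReal ρ) * V = V - ENNReal.ofReal ρ * V := by
        rw [ENNReal.sub_mul (fun _ _ => hVtop), one_mul]
      rw [h1]
      exact ENNReal.le_sub_of_add_le_right (ENNReal.mul_ne_top ENNReal.ofReal_ne_top hVtop) hsum
    have hlim : Filter.Tendsto (fun r => volume (F ∩ Metric.closedBall x r) /
        volume (Metric.closedBall x r)) (nhdsWithin 0 (Set.Ioi 0)) (nhds 1) := by
      have : F.indicator (1 : ℝ → ENNReal) x = 1 := by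
        rw [Set.indicator_of_mem hxF]; rfl
      rwa [this] at hxT
    have hle : (1 : ENNReal) ≤ 1 - ENNReal.ofReal ρ :=
      le_of_tendsto hlim (Filter.eventually_of_mem (Ioo_mem_nhdsGT_of_mem ⟨le_refl 0, hε⟩) hub)
    have hlt : (1 : ENNReal) - ENNReal.ofReal ρ < 1 := by
      refine ENNReal.sub_lt_self ENNReal.one_ne_top one_ne_zero ?_
      simp only [ne_eq, ENNReal.ofReal_eq_zero, not_le]
      exact hρ
    exact absurd hle (not_le.2 hlt)
  have h1 : volume I ≤ volume E := by
    calc volume I ≤ volume (E ∪ F) := measure_mono (fun x hx => by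
          by_cases h : x ∈ E
          · exact Or.inl h
          · exact Or.inr ⟨hx, h⟩)
      _ ≤ volume E + volume F := measure_union_le _ _
      _ = volume E := by rw [hFzero, add_zero]
  exact le_antisymm (measure_mono hEI) h1
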